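/- Let (Ω, F, P) be a probability space and φ a bounded random variable. Then -ln(E_P[e^φ]) = inf over probability measures Q absolutely continuous with respect to P of (E_Q[-φ] + H(Q|P)), where H(Q|P) = E_Q[ln(dQ/dP)] is the relative entropy. Moreover, the infimum is attained by the measure Q* with dQ*/dP = e^φ / E_P[e^φ]. -/

import Mathlib

open MeasureTheory Real Classical

/-- Aggregate (here: static) relative entropy `H(Q|P) = E_Q[log (dQ/dP)]`,
set to `+∞` when the log-density is not `Q`-integrable. -/
noncomputable def relEntropy {Ω : Type*} [MeasurableSpace Ω] (Q P : Measure Ω) : EReal :=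
  if Integrable (fun ω => Real.log ((Q.rnDeriv P ω).toReal)) Q then
    (((∫ ω, Real.log ((Q.rnDeriv P ω).toReal) ∂Q) : ℝ) : EReal)
  else ⊤

/-- Nonnegativity of relative entropy (when the llr is integrable). -/
lemma aux_integral_llr_nonneg {Ω : Type*} [MeasurableSpace Ω] (Q ν : Measure Ω)
    [IsProbabilityMeasure Q] [IsProbabilityMeasure ν] (hQν : Q ≪ ν)
    (h_int : Integrable (llr Q ν) Q) : 0 ≤ ∫ ω, llr Q ν ω ∂Q := by
  have h_int2 : Integrable (fun ω => (ν.rnDeriv Q ω).toReal) Q :=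
    Measure.integrable_toReal_rnDeriv
  have hle : ∫ ω, (1 - (ν.rnDeriv Q ω).toReal) ∂Q ≤ ∫ ω, llr Q ν ω ∂Q := by
    refine integral_mono_ae ((integrable_const 1).sub h_int2) h_int ?_
    filter_upwards [Measure.rnDeriv_pos hQν, hQν.ae_le (Measure.rnDeriv_lt_top Q ν),
      Measure.inv_rnDeriv hQν] with ω hpos hlt hinv
    have hx : 0 < (Q.rnDeriv ν ω).toReal := ENNReal.toReal_pos hpos.ne' hlt.ne
    have hinv' : ((Q.rnDeriv ν ω).toReal)⁻¹ = (ν.rnDeriv Q ω).toReal := by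
      rw [← ENNReal.toReal_inv]
      exact congrArg ENNReal.toReal hinv
    have := Real.one_sub_inv_le_log_of_pos hx
    rw [hinv'] at this
    simpa [llr] using this
  have heq : ∫ ω, (1 - (ν.rnDeriv Q ω).toReal) ∂Q
      = 1 - ∫ ω, (ν.rnDeriv Q ω).toReal ∂Q := by
    rw [integral_sub (integrable_const 1) h_int2]
    simp
  have hb : ∫ ω, (ν.rnDeriv Q ω).toReal ∂Q ≤ 1 := by
    rw [Measure.integral_toReal_rnDeriv']
    have h1 : (ν Set.univ).toReal = 1 := by simp
    have h2 : 0 ≤ ((ν.singularPart Q) Set.univ).toReal := ENNReal.toReal_nonneg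
    simp only [measureReal_def]
    linarith
  linarith [hle, heq ▸ hle]

/-- Gibbs / Donsker–Varadhan variational formula: for a bounded random variable `φ`,
`-log E_P[e^φ] = inf_{Q ≪ P} (E_Q[-φ] + H(Q|P))`, the infimum being attained at the
tilted measure `dQ*/dP = e^φ / E_P[e^φ]`. -/
theorem gibbs_variational_formula
    {Ω : Type*} [MeasurableSpace Ω] (P : Measure Ω) [IsProbabilityMeasure P]
    (φ : Ω → ℝ) (hφ : Measurable φ) (C : ℝ) (hC : ∀ ω, |φ ω| ≤ C)
    (Qstar : Measure Ω)
    (hQstar : Qstar = P.withDensity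
      (fun ω => ENNReal.ofReal (Real.exp (φ ω) / ∫ ω', Real.exp (φ ω') ∂P))) :
    (((- Real.log (∫ ω, Real.exp (φ ω) ∂P)) : ℝ) : EReal) =
      (⨅ Q : {Q : Measure Ω // IsProbabilityMeasure Q ∧ Q ≪ P},
        ((((∫ ω, -φ ω ∂(Q : Measure Ω))) : ℝ) : EReal) + relEntropy (Q : Measure Ω) P) ∧
    ((((∫ ω, -φ ω ∂Qstar)) : ℝ) : EReal) + relEntropy Qstar P =
      (((- Real.log (∫ ω, Real.exp (φ ω) ∂P)) : ℝ) : EReal) := by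
  -- basic facts
  have hQstar' : Qstar = P.tilted φ := hQstar
  set Z : ℝ := ∫ ω, Real.exp (φ ω) ∂P with hZ
  have h_exp_int : Integrable (fun ω => Real.exp (φ ω)) P := by
    refine Integrable.mono' (integrable_const (Real.exp C)) (hφ.exp.aestronglyMeasurable) ?_
    refine Filter.Eventually.of_forall fun ω => ?_
    rw [Real.norm_eq_abs, Real.abs_exp]
    exact Real.exp_le_exp.2 ((le_abs_self _).trans (hC ω))
  have hZpos : 0 < Z := integral_exp_pos h_exp_int
  have hQstarProb : IsProbabilityMeasure Qstar := by
    rw [hQstar']; exact isProbabilityMeasure_tilted h_exp_int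
  have hQstarAC : Qstar ≪ P := by rw [hQstar']; exact tilted_absolutelyContinuous P φ
  -- integrability of φ w.r.t. any probability measure
  have hφ_int : ∀ (Q : Measure Ω), IsProbabilityMeasure Q → Integrable φ Q := by
    intro Q _
    exact Integrable.mono' (integrable_const C) hφ.aestronglyMeasurable
      (Filter.Eventually.of_forall hC)
  -- the llr of Qstar w.r.t. P
  have h_llr_P : (fun ω => Real.log ((Qstar.rnDeriv P ω).toReal)) =ᵐ[P]
      fun ω => φ ω - Real.log Z := by
    rw [hQstar']
    exact log_rnDeriv_tilted_left_self h_exp_int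
  have h_llr : (fun ω => Real.log ((Qstar.rnDeriv P ω).toReal)) =ᵐ[Qstar]
      fun ω => φ ω - Real.log Z := hQstarAC.ae_le h_llr_P
  have h_llr_int : Integrable (fun ω => Real.log ((Qstar.rnDeriv P ω).toReal)) Qstar := by
    rw [integrable_congr h_llr]
    exact (hφ_int Qstar hQstarProb).sub (integrable_const _)
  -- Part 2
  have part2 : ((((∫ ω, -φ ω ∂Qstar)) : ℝ) : EReal) + relEntropy Qstar P =
      (((- Real.log Z) : ℝ) : EReal) := by
    rw [relEntropy, if_pos h_llr_int, integral_congr_ae h_llr, ← EReal.coe_add]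
    norm_cast
    rw [integral_neg, integral_sub (hφ_int Qstar hQstarProb) (integrable_const _)]
    simp
    ring
  -- lower bound for each Q
  have hlb : ∀ Q : {Q : Measure Ω // IsProbabilityMeasure Q ∧ Q ≪ P},
      (((- Real.log Z) : ℝ) : EReal) ≤
        ((((∫ ω, -φ ω ∂(Q : Measure Ω))) : ℝ) : EReal) + relEntropy (Q : Measure Ω) P := by
    rintro ⟨Q, hQprob, hQac⟩
    rw [relEntropy]
    by_cases h_int : Integrable (fun ω => Real.log ((Q.rnDeriv P ω).toReal)) Q
    · rw [if_pos h_int, ← EReal.coe_add, EReal.coe_le_coe_iff]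
      have h_int' : Integrable (llr Q P) Q := h_int
      have hT : IsProbabilityMeasure (P.tilted φ) := isProbabilityMeasure_tilted h_exp_int
      have hQT : Q ≪ P.tilted φ := hQac.trans (absolutelyContinuous_tilted h_exp_int)
      have h_tilt_int : Integrable (llr Q (P.tilted φ)) Q :=
        integrable_llr_tilted_right hQac (hφ_int Q hQprob) h_int' h_exp_int
      have h_eq := integral_llr_tilted_right hQac (hφ_int Q hQprob) h_exp_int h_int'
      have h_nonneg := aux_integral_llr_nonneg Q (P.tilted φ) hQT h_tilt_int
      rw [h_eq] at h_nonneg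
      rw [integral_neg]
      have : ∫ ω, llr Q P ω ∂Q = ∫ ω, Real.log ((Q.rnDeriv P ω).toReal) ∂Q := rfl
      linarith [this ▸ h_nonneg]
    · rw [if_neg h_int]
      exact le_top.trans_eq (EReal.coe_add_top _).symm
  constructor
  · refine le_antisymm (le_iInf hlb) ?_
    refine (iInf_le _ ⟨Qstar, hQstarProb, hQstarAC⟩).trans ?_
    exact le_of_eq part2
  · exact part2
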